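/- The symmetric matrix Ω₁ = (λ₀/2)·[[λ₀²+2α₀, 0, -λ₀],[0, 2k_α₀+5k_λ₀², -3k_λ₀],[-λ₀, -3k_λ₀, 1]] is positive definite provided λ₀, α₀, k_λ₀, k_α₀ > 0 and 4α₀k_α₀ > 8k_λ₀²α₀ + 9λ₀²k_λ₀². -/

import Mathlib

theorem stmt_2 (lam0 alpha0 klam0 kalpha0 : ℝ)
    (hlam : 0 < lam0) (halpha : 0 < alpha0) (hklam : 0 < klam0) (hkalpha : 0 < kalpha0)
    (hgain : 4*alpha0*kalpha0 > 8*klam0^2*alpha0 + 9*lam0^2*klam0^2) :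
    ((lam0/2) • !![lam0^2 + 2*alpha0, 0, -lam0;
                   0, 2*kalpha0 + 5*klam0^2, -3*klam0;
                   -lam0, -3*klam0, 1]).PosDef := by
  rw [Matrix.posDef_iff_dotProduct_mulVec]
  constructor
  · unfold Matrix.IsHermitian
    ext i j
    fin_cases i <;> fin_cases j <;>
      simp [Matrix.conjTranspose_apply, Matrix.smul_apply]
  · intro x hx
    obtain ⟨i, hi⟩ := Function.ne_iff.mp hx
    simp only [dotProduct, Matrix.mulVec, Matrix.smul_apply, Fin.sum_univ_three,
      Matrix.cons_val', Matrix.cons_val_zero, Matrix.cons_val_one, Matrix.head_cons,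
      Matrix.empty_val', Matrix.cons_val_fin_one, Matrix.head_fin_const,
      Matrix.of_apply, Matrix.cons_val_two, Matrix.tail_cons, smul_eq_mul,
      RCLike.star_def, starRingEnd_apply, star_trivial]
    have hgain' : 0 < 4*alpha0*kalpha0 - 8*klam0^2*alpha0 - 9*lam0^2*klam0^2 := by linarith
    have key : ∀ a b c : ℝ, (a ≠ 0 ∨ b ≠ 0 ∨ c ≠ 0) →
        0 < (lam0^2 + 2*alpha0) * a^2 + (2*kalpha0 + 5*klam0^2) * b^2 + c^2
          - 2*lam0*a*c - 6*klam0*b*c := by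
      intro a b c habc
      rcases eq_or_ne b 0 with hb | hb
      · subst hb
        rcases eq_or_ne a 0 with ha | ha
        · subst ha
          have hc : c ≠ 0 := by tauto
          have h2 : 0 < c^2 := by positivity
          nlinarith [h2]
        · have h2 : 0 < a^2 := by positivity
          nlinarith [sq_nonneg (c - lam0*a), mul_pos halpha h2]
      · have hb2 : 0 < b^2 := by positivity
        nlinarith [sq_nonneg (c - lam0*a - 3*klam0*b), sq_nonneg (2*alpha0*a - 3*lam0*klam0*b),
          mul_pos hgain' hb2, mul_nonneg halpha.le (sq_nonneg (c - lam0*a - 3*klam0*b)),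
          mul_nonneg halpha.le (sq_nonneg a)]
    have hcase : x 0 ≠ 0 ∨ x 1 ≠ 0 ∨ x 2 ≠ 0 := by
      fin_cases i
      · exact Or.inl hi
      · exact Or.inr (Or.inl hi)
      · exact Or.inr (Or.inr hi)
    have hk := key (x 0) (x 1) (x 2) hcase
    have hhalf : 0 < lam0 / 2 := by linarith
    nlinarith [mul_pos hhalf hk]
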